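/- If G' is a bisubdivision of a matchable graph G, then Af(G') ≤ Af(G). -/

import Mathlib

/-- `M` is a perfect matching of `G`, regarded as a set of edges: every edge of `M` is an
edge of `G` and every vertex lies in exactly one edge of `M`. -/
def IsPM {V : Type*} (G : SimpleGraph V) (M : Set (Sym2 V)) : Prop :=
  M ⊆ G.edgeSet ∧ ∀ w : V, ∃! e, e ∈ M ∧ w ∈ e

/-- A graph is matchable if it has a perfect matching. -/
def Matchable {V : Type*} (G : SimpleGraph V) : Prop :=
  ∃ M, IsPM G M

/-- A global forcing set of `G`: a set `S` of edges of `G` distinguishing all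
perfect matchings of `G`. -/
def IsGlobalForcingSet {V : Type*} (G : SimpleGraph V) (S : Set (Sym2 V)) : Prop :=
  S ⊆ G.edgeSet ∧
    ∀ M₁ M₂, IsPM G M₁ → IsPM G M₂ → M₁ ≠ M₂ → S ∩ M₁ ≠ S ∩ M₂

/-- The global forcing number: the minimum cardinality of a global forcing set. -/
noncomputable def gf {V : Type*} (G : SimpleGraph V) : ℕ :=
  sInf {n | ∃ S, IsGlobalForcingSet G S ∧ S.ncard = n}

/-- An anti-forcing set of a perfect matching `M` of `G`: a set `S` of edges of `G`
disjoint from `M` such that `M` is the unique perfect matching of `G - S`. -/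
def IsAntiForcingSet {V : Type*} (G : SimpleGraph V) (M S : Set (Sym2 V)) : Prop :=
  S ⊆ G.edgeSet ∧ S ∩ M = ∅ ∧ IsPM (G.deleteEdges S) M ∧
    ∀ M', IsPM (G.deleteEdges S) M' → M' = M

/-- The anti-forcing number of a perfect matching `M` of `G`. -/
noncomputable def af {V : Type*} (G : SimpleGraph V) (M : Set (Sym2 V)) : ℕ :=
  sInf {n | ∃ S, IsAntiForcingSet G M S ∧ S.ncard = n}

/-- The maximum anti-forcing number of `G`. -/
noncomputable def Af {V : Type*} (G : SimpleGraph V) : ℕ :=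
  sSup {n | ∃ M, IsPM G M ∧ af G M = n}

/-- `G'` is a bisubdivision of `G` on the edge set `S`: `G'` is obtained from `G` by
replacing each edge of `G` by a path of odd length between its endpoints whose internal
vertices are new, these paths being pairwise internally disjoint, where every edge not
in `S` is kept as a single edge (replaced by a path of length one). -/
def IsBisubdivisionOn {V V' : Type*} (G : SimpleGraph V) (S : Set (Sym2 V))
    (G' : SimpleGraph V') : Prop :=
  ∃ (φ : V ↪ V') (P : ∀ ⦃u v : V⦄, G.Adj u v → G'.Walk (φ u) (φ v)),
    (∀ ⦃u v : V⦄ (h : G.Adj u v), (P h).IsPath) ∧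
    (∀ ⦃u v : V⦄ (h : G.Adj u v), Odd (P h).length) ∧
    (∀ ⦃u v : V⦄ (h : G.Adj u v), s(u, v) ∉ S → (P h).length = 1) ∧
    (∀ ⦃u v : V⦄ (h : G.Adj u v), P h.symm = (P h).reverse) ∧
    (∀ ⦃u v a b : V⦄ (h : G.Adj u v) (h' : G.Adj a b), s(u, v) ≠ s(a, b) →
      ∀ w, w ∈ (P h).support → w ∈ (P h').support → w = φ a ∨ w = φ b) ∧
    (∀ ⦃u v : V⦄ (h : G.Adj u v) (x : V), φ x ∈ (P h).support → x = u ∨ x = v) ∧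
    (∀ w : V', (∃ (u v : V) (h : G.Adj u v), w ∈ (P h).support) ∨ ∃ x : V, w = φ x) ∧
    (∀ e ∈ G'.edgeSet, ∃ (u v : V) (h : G.Adj u v), e ∈ (P h).edges)

/-- `G'` is a bisubdivision of `G` (on some set of edges of `G`). -/
def IsBisubdivision {V V' : Type*} (G : SimpleGraph V) (G' : SimpleGraph V') : Prop :=
  ∃ S ⊆ G.edgeSet, IsBisubdivisionOn G S G'

/-! ### Auxiliary machinery -/

namespace AFAux

open SimpleGraph Walk

/-- `w` is covered by an edge of `N` lying on `p`. -/
def covW {V' : Type*} {G' : SimpleGraph V'} (N : Set (Sym2 V')) {x y : V'}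
    (p : G'.Walk x y) (w : V') : Prop :=
  ∃ e ∈ N, e ∈ p.edges ∧ w ∈ e

/-- internal condition: every `N`-edge at an internal vertex of `p` is an edge of `p`. -/
def intC {V' : Type*} {G' : SimpleGraph V'} (N : Set (Sym2 V')) {x y : V'}
    (p : G'.Walk x y) : Prop :=
  ∀ w ∈ p.support, w ≠ x → w ≠ y → ∀ e ∈ N, w ∈ e → e ∈ p.edges

/-- matching condition -/
def mtch {α : Type*} (N : Set (Sym2 α)) : Prop := ∀ w, ∃! e, e ∈ N ∧ w ∈ e

variable {V' : Type*} {G' : SimpleGraph V'}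

lemma mem_support_of_mem_edges' {x y w : V'} {p : G'.Walk x y} {e : Sym2 V'}
    (he : e ∈ p.edges) (hw : w ∈ e) : w ∈ p.support := by
  induction e using Sym2.ind with
  | _ a b =>
    rcases Sym2.mem_iff.1 hw with rfl | rfl
    · exact p.fst_mem_support_of_mem_edges he
    · exact p.snd_mem_support_of_mem_edges he

lemma sym2_eq_of_mem {α : Type*} {a b w x : α} (hw : w ∈ s(a, b)) (hx : x ∈ s(a, b))
    (hne : w ≠ x) : s(a, b) = s(w, x) := by
  rcases Sym2.mem_iff.1 hw with rfl | rfl <;> rcases Sym2.mem_iff.1 hx with rfl | rfl <;>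
    first
      | exact absurd rfl hne
      | rfl
      | exact Sym2.eq_swap

lemma eq_first_of_mem {x v y : V'} (h : G'.Adj x v) (q : G'.Walk v y)
    (hp : (Walk.cons h q).IsPath) {e : Sym2 V'} (he : e ∈ (Walk.cons h q).edges)
    (hx : x ∈ e) : e = s(x, v) := by
  rw [Walk.edges_cons, List.mem_cons] at he
  rcases he with rfl | he
  · rfl
  · exact absurd (mem_support_of_mem_edges' he hx) ((Walk.cons_isPath_iff h q).1 hp).2

lemma covW_cons_iff {x v y : V'} (h : G'.Adj x v) (q : G'.Walk v y)
    (hp : (Walk.cons h q).IsPath) {N : Set (Sym2 V')} :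
    covW N (Walk.cons h q) x ↔ s(x, v) ∈ N := by
  constructor
  · rintro ⟨e, heN, hep, hxe⟩
    rwa [eq_first_of_mem h q hp hep hxe] at heN
  · intro hN
    exact ⟨s(x, v), hN, by simp [Walk.edges_cons], by simp⟩

lemma covW_cons_of_ne {x v y : V'} (h : G'.Adj x v) (q : G'.Walk v y)
    {N : Set (Sym2 V')} (w : V') (hwx : w ≠ x) (hwv : w ≠ v) :
    covW N (Walk.cons h q) w ↔ covW N q w := by
  unfold covW
  simp only [Walk.edges_cons, List.mem_cons]
  constructor
  · rintro ⟨e, heN, (rfl | he), hwe⟩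
    · rcases Sym2.mem_iff.1 hwe with rfl | rfl
      · exact absurd rfl hwx
      · exact absurd rfl hwv
    · exact ⟨e, heN, he, hwe⟩
  · rintro ⟨e, heN, he, hwe⟩
    exact ⟨e, heN, Or.inr he, hwe⟩

lemma covW_congr {x y a b : V'} {N : Set (Sym2 V')} {p : G'.Walk x y} {q : G'.Walk a b}
    (h : ∀ e, e ∈ p.edges ↔ e ∈ q.edges) (w : V') : covW N p w ↔ covW N q w := by
  unfold covW
  constructor
  · rintro ⟨e, h1, h2, h3⟩
    exact ⟨e, h1, (h e).1 h2, h3⟩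
  · rintro ⟨e, h1, h2, h3⟩
    exact ⟨e, h1, (h e).2 h2, h3⟩

lemma intC_tail {x v y : V'} {h : G'.Adj x v} {q : G'.Walk v y} {N : Set (Sym2 V')}
    (hp : (Walk.cons h q).IsPath) (hi : intC N (Walk.cons h q)) : intC N q := by
  intro w hw hwv hwy e heN hwe
  have hx : x ∉ q.support := ((Walk.cons_isPath_iff h q).1 hp).2
  have hwx : w ≠ x := fun hwx => hx (hwx ▸ hw)
  have hmem := hi w (by rw [Walk.support_cons]; exact List.mem_cons_of_mem _ hw)
    hwx hwy e heN hwe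
  rw [Walk.edges_cons, List.mem_cons] at hmem
  rcases hmem with rfl | h2
  · rcases Sym2.mem_iff.1 hwe with rfl | rfl
    · exact absurd rfl hwx
    · exact absurd rfl hwv
  · exact h2

lemma lv {x v z y : V'} (h : G'.Adj x v) (h' : G'.Adj v z) (q : G'.Walk z y)
    {N : Set (Sym2 V')}
    (hp : (Walk.cons h (Walk.cons h' q)).IsPath)
    (hi : intC N (Walk.cons h (Walk.cons h' q))) (hm : mtch N) :
    (s(x, v) ∈ N ↔ s(v, z) ∉ N) := by
  have hpath2 : (Walk.cons h' q).IsPath := hp.of_cons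
  have hxsupp : x ∉ (Walk.cons h' q).support := ((Walk.cons_isPath_iff h _).1 hp).2
  have hvq : v ∉ q.support := ((Walk.cons_isPath_iff h' q).1 hpath2).2
  have hvy : v ≠ y := fun hvy => hvq (hvy ▸ q.end_mem_support)
  have hvx : v ≠ x := h.ne'
  have hxz : x ≠ z := fun hxz => hxsupp (by
    rw [Walk.support_cons]
    exact List.mem_cons_of_mem _ (hxz ▸ q.start_mem_support))
  obtain ⟨ev, ⟨hevN, hvev⟩, huniq⟩ := hm v
  have hv_in : v ∈ (Walk.cons h (Walk.cons h' q)).support := by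
    rw [Walk.support_cons]
    exact List.mem_cons_of_mem _ (Walk.start_mem_support _)
  have hev_edges : ev ∈ (Walk.cons h (Walk.cons h' q)).edges :=
    hi v hv_in hvx hvy ev hevN hvev
  have hev_cases : ev = s(x, v) ∨ ev = s(v, z) := by
    rw [Walk.edges_cons, Walk.edges_cons, List.mem_cons, List.mem_cons] at hev_edges
    rcases hev_edges with h1 | h1 | h1
    · exact Or.inl h1
    · exact Or.inr h1
    · exact absurd (mem_support_of_mem_edges' h1 hvev) hvq
  have hne : s(x, v) ≠ s(v, z) := by
    intro heq
    rcases Sym2.eq_iff.1 heq with ⟨h1, _⟩ | ⟨h1, _⟩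
    · exact h.ne h1
    · exact hxz h1
  constructor
  · intro h1 h2
    have e1 : s(x, v) = ev := huniq _ ⟨h1, by simp⟩
    have e2 : s(v, z) = ev := huniq _ ⟨h2, by simp⟩
    exact hne (e1.trans e2.symm)
  · intro h2
    rcases hev_cases with h3 | h3
    · exact h3 ▸ hevN
    · exact absurd (h3 ▸ hevN) h2

lemma covW_single {x v : V'} (h : G'.Adj x v) {N : Set (Sym2 V')} (w : V')
    (hw : w ∈ s(x, v)) :
    covW N (Walk.cons h Walk.nil) w ↔ s(x, v) ∈ N := by
  constructor
  · rintro ⟨e, heN, hep, hve⟩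
    simp only [Walk.edges_cons, Walk.edges_nil, List.mem_singleton] at hep
    rwa [hep] at heN
  · intro hN
    exact ⟨s(x, v), hN, by simp, hw⟩

lemma parity_lemma {N : Set (Sym2 V')} (hm : mtch N) {v y x : V'} (q : G'.Walk v y)
    (h : G'.Adj x v) (hp : (Walk.cons h q).IsPath) (hi : intC N (Walk.cons h q)) :
    (covW N (Walk.cons h q) x ↔
      (covW N (Walk.cons h q) y ↔ Odd (Walk.cons h q).length)) := by
  cases q with
  | nil =>
    rw [covW_single h x (by simp), covW_single h v (by simp)]
    have hodd : Odd (Walk.cons h (Walk.nil : G'.Walk v v)).length := by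
      simp [Walk.length_cons]
    tauto
  | cons h' q'' =>
    rename_i z
    have hpath2 : (Walk.cons h' q'').IsPath := hp.of_cons
    have hxsupp : x ∉ (Walk.cons h' q'').support := ((Walk.cons_isPath_iff h _).1 hp).2
    have hvq : v ∉ q''.support := ((Walk.cons_isPath_iff h' q'').1 hpath2).2
    have hyx : y ≠ x := by
      intro hyx
      exact hxsupp (hyx ▸ (Walk.end_mem_support _))
    have hyv : y ≠ v := by
      intro hyv
      exact hvq (hyv ▸ q''.end_mem_support)
    have IH := parity_lemma hm q'' h' hpath2 (intC_tail hp hi)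
    have c1 : covW N (Walk.cons h (Walk.cons h' q'')) x ↔ s(x, v) ∈ N :=
      covW_cons_iff h _ hp
    have c2 : covW N (Walk.cons h' q'') v ↔ s(v, z) ∈ N := covW_cons_iff h' q'' hpath2
    have c3 : covW N (Walk.cons h (Walk.cons h' q'')) y ↔ covW N (Walk.cons h' q'') y :=
      covW_cons_of_ne h _ y hyx hyv
    have hlv := lv h h' q'' hp hi hm
    have hodd : Odd (Walk.cons h (Walk.cons h' q'')).length ↔
        ¬ Odd (Walk.cons h' q'').length := by
      rw [Walk.length_cons]
      exact Nat.odd_add_one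
    rw [c1, c3, hodd]
    rw [c2] at IH
    tauto

lemma determinism {N1 N2 : Set (Sym2 V')} (hm1 : mtch N1) (hm2 : mtch N2)
    {v y x : V'} (q : G'.Walk v y) (h : G'.Adj x v)
    (hp : (Walk.cons h q).IsPath) (h1 : intC N1 (Walk.cons h q))
    (h2 : intC N2 (Walk.cons h q)) (hfe : s(x, v) ∈ N1 ↔ s(x, v) ∈ N2) :
    ∀ e ∈ (Walk.cons h q).edges, (e ∈ N1 ↔ e ∈ N2) := by
  cases q with
  | nil =>
    intro e he
    simp only [Walk.edges_cons, Walk.edges_nil, List.mem_singleton] at he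
    rwa [he]
  | cons h' q'' =>
    rename_i z
    intro e he
    rw [Walk.edges_cons, List.mem_cons] at he
    rcases he with rfl | he
    · exact hfe
    · have l1 := lv h h' q'' hp h1 hm1
      have l2 := lv h h' q'' hp h2 hm2
      exact determinism hm1 hm2 q'' h' hp.of_cons (intC_tail hp h1) (intC_tail hp h2)
        (by tauto) e he

lemma covW_ends {N : Set (Sym2 V')} (hm : mtch N) {x y : V'} (p : G'.Walk x y)
    (hp : p.IsPath) (hodd : Odd p.length) (hi : intC N p) :
    covW N p x ↔ covW N p y := by
  cases p with
  | nil => simp [Nat.odd_iff] at hodd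
  | cons h q =>
    have := parity_lemma hm q h hp hi
    rw [this]
    tauto

lemma covW_reverse {N : Set (Sym2 V')} {x y : V'} (p : G'.Walk x y) (w : V') :
    covW N p.reverse w ↔ covW N p w := by
  unfold covW
  simp only [Walk.edges_reverse, List.mem_reverse]

lemma exists_cons_of_ne_nil {x y : V'} (p : G'.Walk x y) (hl : p.length ≠ 0) :
    ∃ (c : V') (hadj : G'.Adj x c) (q : G'.Walk c y), p = Walk.cons hadj q := by
  cases p with
  | nil => simp at hl
  | cons h q => exact ⟨_, h, q, rfl⟩

lemma mtch_eq_of_subset {α : Type*} {N M : Set (Sym2 α)} (hN : mtch N) (hM : mtch M)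
    (h : N ⊆ M) : N = M := by
  apply Set.Subset.antisymm h
  intro e heM
  induction e using Sym2.ind with
  | _ a b =>
    obtain ⟨g, ⟨hgN, hag⟩, _⟩ := hN a
    have hgeq : g = s(a, b) := (hM a).unique ⟨h hgN, hag⟩ ⟨heM, by simp⟩
    exact hgeq ▸ hgN

end AFAux

open AFAux in
lemma exists_antiforcing {V : Type*} (G : SimpleGraph V) (M : Set (Sym2 V))
    (hM : IsPM G M) : IsAntiForcingSet G M (G.edgeSet \ M) := by
  refine ⟨Set.diff_subset, ?_, ⟨?_, hM.2⟩, ?_⟩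
  · ext e
    simp only [Set.mem_inter_iff, Set.mem_diff, Set.mem_empty_iff_false, iff_false]
    rintro ⟨⟨_, h1⟩, h2⟩
    exact h1 h2
  · intro e he
    rw [SimpleGraph.edgeSet_deleteEdges]
    exact ⟨hM.1 he, fun h => h.2 he⟩
  · intro N hN
    apply mtch_eq_of_subset hN.2 hM.2
    intro e heN
    have h1 := hN.1 heN
    rw [SimpleGraph.edgeSet_deleteEdges] at h1
    by_contra h2
    exact h1.2 ⟨h1.1, h2⟩

/-- If `G'` is a bisubdivision of a matchable graph `G`, then `Af(G') ≤ Af(G)`. -/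
theorem statement_6 {V V' : Type*} [Fintype V] [Fintype V']
    (G : SimpleGraph V) (G' : SimpleGraph V') (hG : Matchable G)
    (h : IsBisubdivision G G') :
    Af G' ≤ Af G := by
  classical
  open AFAux in
  obtain ⟨S₀, hS₀sub, φ, P, hPath, hOdd, hone, hRev, hDisj, hSupp, hcov7, hEdges⟩ := h
  -- the projection of a set of edges of G' to a set of edges of G
  set proj : Set (Sym2 V') → Set (Sym2 V) := fun N' =>
    {e | ∃ u v, ∃ hadj : G.Adj u v, e = s(u, v) ∧ AFAux.covW N' (P hadj) (φ u)}
    with hproj_def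
  have hprojmem : ∀ (N' : Set (Sym2 V')) (e : Sym2 V),
      e ∈ proj N' ↔ ∃ u v, ∃ hadj : G.Adj u v, e = s(u, v) ∧
        AFAux.covW N' (P hadj) (φ u) := fun _ _ => Iff.rfl
  -- edges of paths of the same G-edge coincide
  have h_sameEdges : ∀ {u v a b : V} (h1 : G.Adj u v) (h2 : G.Adj a b),
      s(u, v) = s(a, b) → ∀ e, (e ∈ (P h1).edges ↔ e ∈ (P h2).edges) := by
    intro u v a b h1 h2 heq e
    rcases Sym2.eq_iff.1 heq with ⟨rfl, rfl⟩ | ⟨rfl, rfl⟩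
    · rfl
    · rw [show P h2 = (P h1).reverse from hRev h1, SimpleGraph.Walk.edges_reverse,
        List.mem_reverse]
  -- internal vertices are not images of φ
  have h_notim : ∀ {u v : V} (hadj : G.Adj u v) (w : V'), w ∈ (P hadj).support →
      w ≠ φ u → w ≠ φ v → ∀ x : V, w ≠ φ x := by
    intro u v hadj w hw hwu hwv x hwx
    rcases hSupp hadj x (hwx ▸ hw) with rfl | rfl
    · exact hwu hwx
    · exact hwv hwx
  -- the internal condition holds on every path
  have h_intC : ∀ (N' : Set (Sym2 V')), N' ⊆ G'.edgeSet →
      ∀ {u v : V} (hadj : G.Adj u v), AFAux.intC N' (P hadj) := by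
    intro N' hN' u v hadj w hw hwu hwv e heN hwe
    obtain ⟨a, b, h2, he2⟩ := hEdges e (hN' heN)
    have hws : w ∈ (P h2).support := AFAux.mem_support_of_mem_edges' he2 hwe
    by_cases hsame : s(u, v) = s(a, b)
    · exact (h_sameEdges hadj h2 hsame e).2 he2
    · rcases hDisj hadj h2 hsame w hw hws with h3 | h3
      · exact absurd h3 (h_notim hadj w hw hwu hwv a)
      · exact absurd h3 (h_notim hadj w hw hwu hwv b)
  -- membership in proj gives covering for every representation
  have h_covall : ∀ (N' : Set (Sym2 V')), N' ⊆ G'.edgeSet → AFAux.mtch N' →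
      ∀ e ∈ proj N', ∀ (u v : V) (hadj : G.Adj u v), e = s(u, v) →
        AFAux.covW N' (P hadj) (φ u) := by
    intro N' hsub hm e he u v hadj hesv
    obtain ⟨a, b, h2, heq2, hcov⟩ := he
    have hends := AFAux.covW_ends hm (P h2) (hPath h2) (hOdd h2) (h_intC N' hsub h2)
    have hsame : s(u, v) = s(a, b) := by rw [← hesv, ← heq2]
    have hcongr := fun w => AFAux.covW_congr (N := N') (h_sameEdges hadj h2 hsame) w
    rcases Sym2.eq_iff.1 hsame with ⟨rfl, rfl⟩ | ⟨rfl, rfl⟩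
    · exact (hcongr (φ u)).2 hcov
    · exact (hcongr (φ u)).2 (hends.1 hcov)
  -- proj of a perfect matching is a perfect matching
  have h_projPM : ∀ N' : Set (Sym2 V'), IsPM G' N' → IsPM G (proj N') := by
    intro N' hN'
    constructor
    · rintro e ⟨u, v, hadj, rfl, _⟩
      exact hadj
    · intro w
      have claim1 : ∃ e₀, e₀ ∈ proj N' ∧ w ∈ e₀ := by
        obtain ⟨e', ⟨he'N, hwe'⟩, _⟩ := hN'.2 (φ w)
        obtain ⟨u, v, hadj, he'P⟩ := hEdges e' (hN'.1 he'N)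
        have hw : φ w ∈ (P hadj).support := AFAux.mem_support_of_mem_edges' he'P hwe'
        rcases hSupp hadj w hw with rfl | rfl
        · exact ⟨s(w, v), ⟨w, v, hadj, rfl, ⟨e', he'N, he'P, hwe'⟩⟩, by simp⟩
        · refine ⟨s(w, u), ⟨w, u, hadj.symm, rfl, ?_⟩, by simp⟩
          rw [show P hadj.symm = (P hadj).reverse from hRev hadj]
          rw [AFAux.covW_reverse]
          exact ⟨e', he'N, he'P, hwe'⟩
      have claim2 : ∀ f g, f ∈ proj N' → w ∈ f → g ∈ proj N' → w ∈ g → f = g := by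
        intro f g hf hwf hg hwg
        obtain ⟨e'w, ⟨hewN, hwew⟩, hwuniq⟩ := hN'.2 (φ w)
        obtain ⟨u1, v1, h1, rfl, hcov1⟩ := hf
        obtain ⟨u2, v2, h2, rfl, hcov2⟩ := hg
        have hcovw : ∀ (u v : V) (hadj : G.Adj u v), w ∈ s(u, v) → s(u, v) ∈ proj N' →
            e'w ∈ (P hadj).edges := by
          intro u v hadj hwuv hmem
          have hcu : AFAux.covW N' (P hadj) (φ u) :=
            h_covall N' hN'.1 hN'.2 _ hmem u v hadj rfl
          have hcv : AFAux.covW N' (P hadj) (φ v) :=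
            (AFAux.covW_ends hN'.2 (P hadj) (hPath hadj) (hOdd hadj)
              (h_intC N' hN'.1 hadj)).1 hcu
          have hcw : AFAux.covW N' (P hadj) (φ w) := by
            rcases Sym2.mem_iff.1 hwuv with rfl | rfl
            exacts [hcu, hcv]
          obtain ⟨g', hg'N, hg'P, hg'w⟩ := hcw
          rwa [hwuniq g' ⟨hg'N, hg'w⟩] at hg'P
        by_contra hne
        have hE1 := hcovw u1 v1 h1 hwf ⟨u1, v1, h1, rfl, hcov1⟩
        have hE2 := hcovw u2 v2 h2 hwg ⟨u2, v2, h2, rfl, hcov2⟩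
        obtain ⟨c, hc⟩ := Sym2.mem_iff_exists.1 hwew
        subst hc
        have hcne : c ≠ φ w := by
          have hadjwc : G'.Adj (φ w) c := hN'.1 hewN
          exact hadjwc.ne'
        have hwsup1 : φ w ∈ (P h1).support :=
          AFAux.mem_support_of_mem_edges' hE1 (by simp)
        have hcsup1 : c ∈ (P h1).support :=
          AFAux.mem_support_of_mem_edges' hE1 (by simp)
        have hwsup2 : φ w ∈ (P h2).support :=
          AFAux.mem_support_of_mem_edges' hE2 (by simp)
        have hcsup2 : c ∈ (P h2).support :=
          AFAux.mem_support_of_mem_edges' hE2 (by simp)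
        have hne12 : s(u1, v1) ≠ s(u2, v2) := hne
        -- c is an image of an endpoint of both
        obtain ⟨x2, hx2⟩ : ∃ x2 : V, c = φ x2 := by
          rcases hDisj h1 h2 hne12 c hcsup1 hcsup2 with h3 | h3
          · exact ⟨u2, h3⟩
          · exact ⟨v2, h3⟩
        subst hx2
        have hx2m1 : x2 = u1 ∨ x2 = v1 := hSupp h1 x2 hcsup1
        have hx2m2 : x2 = u2 ∨ x2 = v2 := hSupp h2 x2 hcsup2
        have hxw : x2 ≠ w := fun hxw => hcne (by rw [hxw])
        have hx2in1 : x2 ∈ s(u1, v1) := by rcases hx2m1 with rfl | rfl <;> simp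
        have hx2in2 : x2 ∈ s(u2, v2) := by rcases hx2m2 with rfl | rfl <;> simp
        have e1 : s(u1, v1) = s(w, x2) := AFAux.sym2_eq_of_mem hwf hx2in1 hxw.symm
        have e2 : s(u2, v2) = s(w, x2) := AFAux.sym2_eq_of_mem hwg hx2in2 hxw.symm
        exact hne (e1.trans e2.symm)
      obtain ⟨e₀, h1, h2⟩ := claim1
      exact ⟨e₀, ⟨h1, h2⟩, fun f hf => claim2 f e₀ hf.1 hf.2 h1 h2⟩
  -- boundedness of the Af G index set
  have hbdd : BddAbove {n | ∃ M, IsPM G M ∧ af G M = n} := by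
    have hfin : (Set.range (af G)).Finite := Set.finite_range _
    apply hfin.bddAbove.mono
    rintro n ⟨M, _, rfl⟩
    exact ⟨M, rfl⟩
  -- the main estimate
  have main : ∀ M' : Set (Sym2 V'), IsPM G' M' → af G' M' ≤ Af G := by
    intro M' hM'
    have hMPM : IsPM G (proj M') := h_projPM M' hM'
    have hafmem : af G (proj M') ∈
        {n | ∃ S, IsAntiForcingSet G (proj M') S ∧ S.ncard = n} := by
      apply Nat.sInf_mem
      exact ⟨(G.edgeSet \ proj M').ncard, G.edgeSet \ proj M',
        exists_antiforcing G (proj M') hMPM, rfl⟩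
    obtain ⟨S, hS, hScard⟩ := hafmem
    -- choose a "first edge" for each edge of S
    have hchoice : ∀ e : Sym2 V, e ∈ G.edgeSet → ∃ e' : Sym2 V', e' ∈ G'.edgeSet ∧
        (∀ N' : Set (Sym2 V'), N' ⊆ G'.edgeSet → AFAux.mtch N' → e ∈ proj N' →
          e' ∈ N') ∧
        (∀ N' : Set (Sym2 V'), e' ∈ N' → e ∈ proj N') := by
      intro e
      induction e using Sym2.ind with
      | _ u v =>
        intro heE
        have hadj : G.Adj u v := heE
        have hlen : (P hadj).length ≠ 0 := by
          obtain ⟨k, hk⟩ := hOdd hadj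
          omega
        obtain ⟨c, hac, q, hPq⟩ := AFAux.exists_cons_of_ne_nil (P hadj) hlen
        refine ⟨s(φ u, c), hac, ?_, ?_⟩
        · intro N' hN'sub hN'm heproj
          have hcb := h_covall N' hN'sub hN'm _ heproj u v hadj rfl
          obtain ⟨g, hgN, hgP, hg⟩ := hcb
          rw [hPq] at hgP
          have hgeq : g = s(φ u, c) :=
            AFAux.eq_first_of_mem hac q (hPq ▸ hPath hadj) hgP hg
          exact hgeq ▸ hgN
        · intro N' he'
          refine ⟨u, v, hadj, rfl, s(φ u, c), he', ?_, by simp⟩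
          rw [hPq, SimpleGraph.Walk.edges_cons]
          exact List.mem_cons_self
    have hchoice' : ∀ x : {e : Sym2 V // e ∈ S}, ∃ e' : Sym2 V',
        e' ∈ G'.edgeSet ∧
        (∀ N' : Set (Sym2 V'), N' ⊆ G'.edgeSet → AFAux.mtch N' → x.1 ∈ proj N' →
          e' ∈ N') ∧
        (∀ N' : Set (Sym2 V'), e' ∈ N' → x.1 ∈ proj N') :=
      fun x => hchoice x.1 (hS.1 x.2)
    choose f hf1 hf2 hf3 using hchoice'
    set S' : Set (Sym2 V') := Set.range f with hS'def
    have hcard' : S'.ncard ≤ S.ncard := by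
      have h1 : S' = f '' Set.univ := (Set.image_univ).symm
      rw [h1]
      calc (f '' Set.univ).ncard ≤ (Set.univ : Set {e : Sym2 V // e ∈ S}).ncard :=
            Set.ncard_image_le Set.finite_univ
        _ = Nat.card {e : Sym2 V // e ∈ S} := Set.ncard_univ _
        _ = S.ncard := Nat.card_coe_set_eq S
    have hS'sub : S' ⊆ G'.edgeSet := by
      rintro _ ⟨x, rfl⟩
      exact hf1 x
    have hdisj : S' ∩ M' = ∅ := by
      ext e'
      simp only [Set.mem_inter_iff, Set.mem_empty_iff_false, iff_false, not_and]
      rintro ⟨x, rfl⟩ hmem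
      have h1 : x.1 ∈ proj M' := hf3 x M' hmem
      have h2 : x.1 ∈ S ∩ proj M' := ⟨x.2, h1⟩
      rw [hS.2.1] at h2
      exact h2
    have hMpm' : IsPM (G'.deleteEdges S') M' := by
      refine ⟨?_, hM'.2⟩
      intro e he
      rw [SimpleGraph.edgeSet_deleteEdges]
      refine ⟨hM'.1 he, fun heS' => ?_⟩
      have h1 : e ∈ S' ∩ M' := ⟨heS', he⟩
      rw [hdisj] at h1
      exact h1
    have huniq : ∀ N', IsPM (G'.deleteEdges S') N' → N' = M' := by
      intro N' hN'
      have hN'sub : N' ⊆ G'.edgeSet := by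
        intro e he
        have h1 := hN'.1 he
        rw [SimpleGraph.edgeSet_deleteEdges] at h1
        exact h1.1
      have hN'S' : ∀ e ∈ N', e ∉ S' := by
        intro e he
        have h1 := hN'.1 he
        rw [SimpleGraph.edgeSet_deleteEdges] at h1
        exact h1.2
      have hN'pm : IsPM G' N' := ⟨hN'sub, hN'.2⟩
      have hprojN : IsPM G (proj N') := h_projPM N' hN'pm
      have hprojNS : IsPM (G.deleteEdges S) (proj N') := by
        refine ⟨?_, hprojN.2⟩
        intro e he
        rw [SimpleGraph.edgeSet_deleteEdges]
        refine ⟨hprojN.1 he, fun heS => ?_⟩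
        have h1 : f ⟨e, heS⟩ ∈ N' := hf2 ⟨e, heS⟩ N' hN'sub hN'pm.2 he
        exact hN'S' _ h1 ⟨⟨e, heS⟩, rfl⟩
      have hNM : proj N' = proj M' := hS.2.2.2 (proj N') hprojNS
      have key : ∀ (A B : Set (Sym2 V')), IsPM G' A → IsPM G' B →
          proj A = proj B → A ⊆ B := by
        intro A B hA hB hAB e' he'
        obtain ⟨u, v, hadj, he'P⟩ := hEdges e' (hA.1 he')
        have hlen : (P hadj).length ≠ 0 := by
          obtain ⟨k, hk⟩ := hOdd hadj
          omega
        obtain ⟨c, hac, q, hPq⟩ := AFAux.exists_cons_of_ne_nil (P hadj) hlen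
        have hfe : ∀ C : Set (Sym2 V'), IsPM G' C →
            (s(φ u, c) ∈ C ↔ s(u, v) ∈ proj C) := by
          intro C hC
          constructor
          · intro h1
            refine ⟨u, v, hadj, rfl, s(φ u, c), h1, ?_, by simp⟩
            rw [hPq, SimpleGraph.Walk.edges_cons]
            exact List.mem_cons_self
          · intro h1
            have hcb := h_covall C hC.1 hC.2 _ h1 u v hadj rfl
            obtain ⟨g, hgN, hgP, hg⟩ := hcb
            rw [hPq] at hgP
            have hgeq : g = s(φ u, c) :=
              AFAux.eq_first_of_mem hac q (hPq ▸ hPath hadj) hgP hg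
            exact hgeq ▸ hgN
        have hiff : s(φ u, c) ∈ A ↔ s(φ u, c) ∈ B := by
          rw [hfe A hA, hfe B hB, hAB]
        have hintA : AFAux.intC A (SimpleGraph.Walk.cons hac q) :=
          hPq ▸ h_intC A hA.1 hadj
        have hintB : AFAux.intC B (SimpleGraph.Walk.cons hac q) :=
          hPq ▸ h_intC B hB.1 hadj
        have := AFAux.determinism hA.2 hB.2 q hac (hPq ▸ hPath hadj) hintA hintB hiff
          e' (hPq ▸ he'P)
        exact this.1 he'
      exact Set.Subset.antisymm (key N' M' hN'pm hM' hNM)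
        (key M' N' hM' hN'pm hNM.symm)
    have hS'anti : IsAntiForcingSet G' M' S' := ⟨hS'sub, hdisj, hMpm', huniq⟩
    have h1 : af G' M' ≤ S'.ncard := Nat.sInf_le ⟨S', hS'anti, rfl⟩
    have h2 : af G (proj M') ≤ Af G := le_csSup hbdd ⟨proj M', hMPM, rfl⟩
    omega
  -- conclude
  have hAf' : Af G' = sSup {n | ∃ M', IsPM G' M' ∧ af G' M' = n} := rfl
  rcases Set.eq_empty_or_nonempty {n | ∃ M', IsPM G' M' ∧ af G' M' = n} with hE | hne
  · rw [hAf', hE, csSup_empty]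
    exact Nat.zero_le _
  · rw [hAf']
    apply csSup_le hne
    rintro n ⟨M', hM', rfl⟩
    exact main M' hM'
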